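/- Let n ≥ 1, T ≥ 1, 0 < α ≤ β, and set κ = β/α. For each t = 1, …, T let f_1^t, …, f_n^t : ℝ → ℝ belong to the class F(α,β), and write f^t(x) = ∑_{i=1}^n f_i^t(x_i). Then the potential benefit satisfies Pot_T := ∑_{t=1}^T ( f^t(𝟙_n) − inf_{x ∈ S_n} f^t(x) ) ≤ (n/2)·α·(κ − 1)·T. -/

import Mathlib

/-- The class `F(α,β)`: differentiable, `α`-strongly convex (`x ↦ f x - (α/2)x²`
is convex), `β`-smooth (the derivative is `β`-Lipschitz), with `f(0) = 0` and
`f'(0) = 0`. -/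
def MemF (α β : ℝ) (f : ℝ → ℝ) : Prop :=
  Differentiable ℝ f ∧
  ConvexOn ℝ Set.univ (fun x => f x - α / 2 * x ^ 2) ∧
  (∀ x y : ℝ, |deriv f x - deriv f y| ≤ β * |x - y|) ∧
  f 0 = 0 ∧ deriv f 0 = 0

/-- The feasible set `Sₙ`: nonnegative vectors whose entries sum to `n`. -/
def feasibleSet (n : ℕ) : Set (Fin n → ℝ) :=
  {x | (∀ i, 0 ≤ x i) ∧ ∑ i, x i = (n : ℝ)}

/-- A convex differentiable function vanishing to first order at `0` is nonneg. -/
lemma nonneg_of_convex_crit (g : ℝ → ℝ) (hg : ConvexOn ℝ Set.univ g)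
    (hd : Differentiable ℝ g) (h0 : g 0 = 0) (h0' : deriv g 0 = 0) (x : ℝ) :
    0 ≤ g x := by
  rcases lt_trichotomy x 0 with hx | hx | hx
  · have hs := hg.slope_le_deriv (Set.mem_univ x) (Set.mem_univ 0) hx (hd 0)
    rw [h0', slope_def_field, h0] at hs
    have hle : g x / x ≤ 0 := by
      have : (0 - g x) / (0 - x) = g x / x := by
        rw [zero_sub, zero_sub, neg_div_neg_eq]
      linarith [this ▸ hs]
    have := mul_nonneg (neg_nonneg.mpr hle) (neg_nonneg.mpr hx.le)
    rw [neg_mul_neg] at this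
    rwa [div_mul_cancel₀ _ hx.ne] at this
  · simp [hx, h0]
  · have hs := hg.deriv_le_slope (Set.mem_univ 0) (Set.mem_univ x) hx (hd 0)
    rw [h0', slope_def_field, h0, sub_zero, sub_zero] at hs
    have := mul_nonneg hs hx.le
    rwa [div_mul_cancel₀ _ hx.ne'] at this

lemma memF_lower {α β : ℝ} {f : ℝ → ℝ} (hf : MemF α β f) (x : ℝ) :
    α / 2 * x ^ 2 ≤ f x := by
  obtain ⟨hd, hconv, _, h0, h0'⟩ := hf
  have h2 : HasDerivAt (fun x : ℝ => α / 2 * x ^ 2) 0 0 := by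
    simpa using ((hasDerivAt_pow 2 (0 : ℝ)).const_mul (α / 2))
  have hgd : Differentiable ℝ (fun x => f x - α / 2 * x ^ 2) := by
    exact hd.sub ((differentiable_pow 2).const_mul _)
  have hg0' : deriv (fun x => f x - α / 2 * x ^ 2) 0 = 0 := by
    have := ((hd 0).hasDerivAt.sub h2).deriv
    simp only [h0', sub_zero] at this
    exact this
  have := nonneg_of_convex_crit _ hconv hgd (by simp [h0]) hg0' x
  linarith

lemma memF_upper {α β : ℝ} {f : ℝ → ℝ} (hf : MemF α β f) (x : ℝ) :
    f x ≤ β / 2 * x ^ 2 := by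
  obtain ⟨hd, _, hlip, h0, h0'⟩ := hf
  set h : ℝ → ℝ := fun x => β / 2 * x ^ 2 - f x with hh
  have hda : ∀ y : ℝ, HasDerivAt h (β * y - deriv f y) y := by
    intro y
    have h1 : HasDerivAt (fun x : ℝ => β / 2 * x ^ 2) (β * y) y := by
      have := (hasDerivAt_pow 2 y).const_mul (β / 2)
      refine this.congr_deriv ?_
      ring
    exact h1.sub (hd y).hasDerivAt
  have hdiff : Differentiable ℝ h := fun y => (hda y).differentiableAt
  have hderiv : deriv h = fun y => β * y - deriv f y := funext fun y => (hda y).deriv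
  have hmono : Monotone (deriv h) := by
    rw [hderiv]
    intro a b hab
    have := hlip b a
    have habs : deriv f b - deriv f a ≤ β * (b - a) := by
      rcases abs_le.mp this with ⟨_, h2⟩
      calc deriv f b - deriv f a ≤ β * |b - a| := h2
        _ = β * (b - a) := by rw [abs_of_nonneg (by linarith)]
    simp only
    linarith
  have hconv : ConvexOn ℝ Set.univ h := hmono.convexOn_univ_of_deriv hdiff
  have hh0 : h 0 = 0 := by simp [hh, h0]
  have hh0' : deriv h 0 = 0 := by rw [hderiv]; simp [h0']
  have := nonneg_of_convex_crit h hconv hdiff hh0 hh0' x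
  simp only [hh] at this
  linarith

/-- With time-varying local costs `fᵢᵗ ∈ F(α,β)` for
`t = 1, …, T`, the potential benefit satisfies
`Pot_T = ∑_{t=1}^T (fᵗ(𝟙ₙ) - inf_{x ∈ Sₙ} fᵗ(x)) ≤ (n/2)·α·(κ - 1)·T`
where `κ = β/α`. -/
theorem stmt_6 (n T : ℕ) (hn : 1 ≤ n) (hT : 1 ≤ T)
    (α β : ℝ) (hα : 0 < α) (hαβ : α ≤ β)
    (f : ℕ → Fin n → ℝ → ℝ) (hf : ∀ t ∈ Finset.Icc 1 T, ∀ i, MemF α β (f t i)) :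
    ∑ t ∈ Finset.Icc 1 T,
        ((∑ i, f t i 1) -
          sInf ((fun x : Fin n → ℝ => ∑ i, f t i (x i)) '' feasibleSet n))
      ≤ (n : ℝ) / 2 * α * (β / α - 1) * T := by
  have hC : (n : ℝ) / 2 * α * (β / α - 1) = (n : ℝ) / 2 * (β - α) := by
    field_simp
  have key : ∀ t ∈ Finset.Icc 1 T,
      (∑ i, f t i 1) -
        sInf ((fun x : Fin n → ℝ => ∑ i, f t i (x i)) '' feasibleSet n)
      ≤ (n : ℝ) / 2 * (β - α) := by
    intro t ht
    have hft := hf t ht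
    -- upper bound at the all-ones point
    have hup : (∑ i, f t i 1) ≤ (n : ℝ) * (β / 2) := by
      calc (∑ i, f t i 1) ≤ ∑ _i : Fin n, β / 2 := by
            apply Finset.sum_le_sum
            intro i _
            simpa using memF_upper (hft i) 1
        _ = (n : ℝ) * (β / 2) := by simp [Finset.sum_const, mul_comm]
    -- the image set is nonempty
    have hne : ((fun x : Fin n → ℝ => ∑ i, f t i (x i)) '' feasibleSet n).Nonempty := by
      refine ⟨∑ i, f t i 1, ⟨fun _ => 1, ⟨fun i => zero_le_one, by simp⟩, rfl⟩⟩
    -- lower bound on the infimum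
    have hlb : (n : ℝ) * (α / 2) ≤
        sInf ((fun x : Fin n → ℝ => ∑ i, f t i (x i)) '' feasibleSet n) := by
      apply le_csInf hne
      rintro y ⟨x, ⟨hx0, hxs⟩, rfl⟩
      have hcs : ((n : ℝ)) ^ 2 ≤ (n : ℝ) * ∑ i, x i ^ 2 := by
        have := sq_sum_le_card_mul_sum_sq (s := Finset.univ) (f := x)
        simpa [hxs] using this
      have hnpos : (0 : ℝ) < n := by exact_mod_cast hn
      have hsum2 : (n : ℝ) ≤ ∑ i, x i ^ 2 := by
        nlinarith
      calc (n : ℝ) * (α / 2) ≤ (α / 2) * ∑ i, x i ^ 2 := by nlinarith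
        _ = ∑ i, α / 2 * x i ^ 2 := by rw [Finset.mul_sum]
        _ ≤ ∑ i, f t i (x i) := Finset.sum_le_sum fun i _ => memF_lower (hft i) (x i)
    have : (n : ℝ) * (β / 2) - (n : ℝ) * (α / 2) = (n : ℝ) / 2 * (β - α) := by ring
    linarith
  calc ∑ t ∈ Finset.Icc 1 T,
        ((∑ i, f t i 1) -
          sInf ((fun x : Fin n → ℝ => ∑ i, f t i (x i)) '' feasibleSet n))
      ≤ ∑ _t ∈ Finset.Icc 1 T, (n : ℝ) / 2 * (β - α) := Finset.sum_le_sum key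
    _ = (n : ℝ) / 2 * α * (β / α - 1) * T := by
        rw [Finset.sum_const, Nat.card_Icc, hC]
        simp
        ring
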